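/- Suppose k ≥ 2 and k < m < 2k, and n > k. In any fault-free tiling of an m×n rectangle by k×1 tiles, there exist k contiguous rows such that every tile meeting any of the remaining m−k rows is horizontal. -/
import Mathlib


/-- The cells of an `m × n` rectangle: `(row, column)` with `row < m`, `column < n`. -/
def grid (m n : ℕ) : Finset (ℕ × ℕ) := Finset.range m ×ˢ Finset.range n

/-- A horizontal `k × 1` tile: `k` consecutive cells in one row. -/
def IsHTile (k : ℕ) (t : Finset (ℕ × ℕ)) : Prop :=
  ∃ i j : ℕ, t = (Finset.range k).image fun s => (i, j + s)

/-- A vertical `k × 1` tile: `k` consecutive cells in one column. -/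
def IsVTile (k : ℕ) (t : Finset (ℕ × ℕ)) : Prop :=
  ∃ i j : ℕ, t = (Finset.range k).image fun s => (i + s, j)

/-- A tiling of the `m × n` rectangle by `k × 1` tiles. -/
def IsTiling (m n k : ℕ) (T : Finset (Finset (ℕ × ℕ))) : Prop :=
  (∀ t ∈ T, IsHTile k t ∨ IsVTile k t) ∧
  (T : Set (Finset (ℕ × ℕ))).PairwiseDisjoint id ∧
  T.biUnion id = grid m n

/-- The number of tilings of the `m × n` rectangle by `k × 1` tiles. -/
noncomputable def numTilings (m n k : ℕ) : ℕ :=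
  Nat.card {T : Finset (Finset (ℕ × ℕ)) // IsTiling m n k T}

/-- The tiling `T` has a fault at `x = a`: every tile lies entirely in
columns `< a` or entirely in columns `≥ a`. -/
def HasFaultAt (T : Finset (Finset (ℕ × ℕ))) (a : ℕ) : Prop :=
  ∀ t ∈ T, (∀ c ∈ t, c.2 < a) ∨ (∀ c ∈ t, a ≤ c.2)

/-- A tiling of a rectangle with `n` columns is fault-free. -/
def FaultFree (n : ℕ) (T : Finset (Finset (ℕ × ℕ))) : Prop :=
  ∀ a : ℕ, 0 < a → a < n → ¬ HasFaultAt T a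

/-- The number of fault-free tilings of the `m × n` rectangle by `k × 1` tiles. -/
noncomputable def numFFTilings (m n k : ℕ) : ℕ :=
  Nat.card {T : Finset (Finset (ℕ × ℕ)) // IsTiling m n k T ∧ FaultFree n T}

namespace Stmt5Aux

/-- vertical tile with start row `i`, column `j` -/
def vt (k i j : ℕ) : Finset (ℕ × ℕ) := (Finset.range k).image fun s => (i + s, j)
/-- horizontal tile in row `i`, starting column `j` -/
def htl (k i j : ℕ) : Finset (ℕ × ℕ) := (Finset.range k).image fun s => (i, j + s)

lemma mem_vt {k i j r c : ℕ} : (r, c) ∈ vt k i j ↔ i ≤ r ∧ r < i + k ∧ c = j := by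
  simp only [vt, Finset.mem_image, Finset.mem_range, Prod.mk.injEq]
  constructor
  · rintro ⟨s, hs, rfl, rfl⟩; omega
  · rintro ⟨h1, h2, rfl⟩; exact ⟨r - i, by omega, by omega, rfl⟩

lemma mem_htl {k i j r c : ℕ} : (r, c) ∈ htl k i j ↔ r = i ∧ j ≤ c ∧ c < j + k := by
  simp only [htl, Finset.mem_image, Finset.mem_range, Prod.mk.injEq]
  constructor
  · rintro ⟨s, hs, rfl, rfl⟩; omega
  · rintro ⟨rfl, h1, h2⟩; exact ⟨c - j, by omega, rfl, by omega⟩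

lemma isVTile_vt {k i j : ℕ} : IsVTile k (vt k i j) := ⟨i, j, rfl⟩
lemma isHTile_htl {k i j : ℕ} : IsHTile k (htl k i j) := ⟨i, j, rfl⟩

lemma vtile_eq {k : ℕ} {t : Finset (ℕ × ℕ)} (h : IsVTile k t) : ∃ i j, t = vt k i j := h
lemma htile_eq {k : ℕ} {t : Finset (ℕ × ℕ)} (h : IsHTile k t) : ∃ i j, t = htl k i j := h

lemma not_H_of_V {k : ℕ} (hk : 2 ≤ k) {t : Finset (ℕ × ℕ)}
    (hv : IsVTile k t) (hh : IsHTile k t) : False := by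
  obtain ⟨i, j, rfl⟩ := hv
  obtain ⟨i', j', he⟩ := hh
  have h0 : (i, j) ∈ vt k i j := mem_vt.mpr ⟨le_refl _, by omega, rfl⟩
  have h1 : (i + 1, j) ∈ vt k i j := mem_vt.mpr ⟨by omega, by omega, rfl⟩
  have he' : vt k i j = htl k i' j' := he
  rw [he'] at h0 h1
  have := (mem_htl.mp h0).1
  have := (mem_htl.mp h1).1
  omega

section Tiling

variable {m n k : ℕ} {T : Finset (Finset (ℕ × ℕ))}

lemma same_tile (hT : IsTiling m n k T) {t t' : Finset (ℕ × ℕ)}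
    (h1 : t ∈ T) (h2 : t' ∈ T) {c : ℕ × ℕ} (hc : c ∈ t) (hc' : c ∈ t') : t = t' := by
  by_contra hne
  exact (Finset.disjoint_left.mp (hT.2.1 h1 h2 hne) hc) hc'

lemma covered (hT : IsTiling m n k T) {r c : ℕ} (hr : r < m) (hc : c < n) :
    ∃ t ∈ T, (r, c) ∈ t := by
  have h : (r, c) ∈ grid m n := by
    simp [grid, Finset.mem_product, hr, hc]
  rw [← hT.2.2] at h
  simpa using Finset.mem_biUnion.mp h

lemma sub_grid (hT : IsTiling m n k T) {t : Finset (ℕ × ℕ)} (htT : t ∈ T)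
    {c : ℕ × ℕ} (hc : c ∈ t) : c.1 < m ∧ c.2 < n := by
  have h : c ∈ T.biUnion id := Finset.mem_biUnion.mpr ⟨t, htT, hc⟩
  rw [hT.2.2] at h
  simpa [grid, Finset.mem_product] using h

/-- `(r,c)` is covered by a vertical tile. -/
def Vcov (k : ℕ) (T : Finset (Finset (ℕ × ℕ))) (r c : ℕ) : Prop :=
  ∃ t ∈ T, IsVTile k t ∧ (r, c) ∈ t

/-- some tile of row `r` crosses the line `x = a`. -/
def Cross (T : Finset (Finset (ℕ × ℕ))) (r a : ℕ) : Prop :=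
  0 < a ∧ ∃ t ∈ T, (r, a - 1) ∈ t ∧ (r, a) ∈ t

lemma vcov_lt_n (hT : IsTiling m n k T) {r c : ℕ} (h : Vcov k T r c) : c < n := by
  obtain ⟨t, htT, _, hmem⟩ := h
  exact (sub_grid hT htT hmem).2

lemma vcov_not_cross (hT : IsTiling m n k T) {r a : ℕ} (h : Vcov k T r a) :
    ¬ Cross T r a ∧ ¬ Cross T r (a + 1) := by
  obtain ⟨t, htT, hV, hmem⟩ := h
  obtain ⟨i, j, rfl⟩ := vtile_eq hV
  have hj : a = j := (mem_vt.mp hmem).2.2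
  constructor
  · rintro ⟨ha, t', ht'T, hm1, hm2⟩
    have : t' = vt k i j := same_tile hT ht'T htT hm2 hmem
    subst this
    have := (mem_vt.mp hm1).2.2
    omega
  · rintro ⟨ha, t', ht'T, hm1, hm2⟩
    have hm1' : (r, a) ∈ t' := by simpa using hm1
    have : t' = vt k i j := same_tile hT ht'T htT hm1' hmem
    subst this
    have := (mem_vt.mp hm2).2.2
    omega

/-- If the line `x = a` is not crossed in row `r` and `(r,a)` is not vertically covered,
the tile covering `(r,a)` is the horizontal tile `[a, a+k)` of row `r`. -/
lemma hstep (hT : IsTiling m n k T) (hk : 2 ≤ k) {r a : ℕ} (hr : r < m) (ha : a < n)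
    (hnc : ¬ Cross T r a) (hnv : ¬ Vcov k T r a) : htl k r a ∈ T := by
  obtain ⟨t, htT, hmem⟩ := covered hT hr ha
  rcases hT.1 t htT with hH | hV
  · obtain ⟨i', j', rfl⟩ := htile_eq hH
    obtain ⟨rfl, hj1, hj2⟩ := mem_htl.mp hmem
    rcases Nat.lt_or_ge j' a with hlt | hge
    · exfalso
      apply hnc
      refine ⟨by omega, htl k r j', htT, ?_, hmem⟩
      exact mem_htl.mpr ⟨rfl, by omega, by omega⟩
    · have : j' = a := by omega
      subst this; exact htT
  · exact absurd ⟨t, htT, hV, hmem⟩ hnv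

lemma htl_no_vcov (hT : IsTiling m n k T) (hk : 2 ≤ k) {r a : ℕ} (h : htl k r a ∈ T)
    {c : ℕ} (h1 : a ≤ c) (h2 : c < a + k) : ¬ Vcov k T r c := by
  rintro ⟨t', ht'T, hV, hmem⟩
  have hmem2 : (r, c) ∈ htl k r a := mem_htl.mpr ⟨rfl, h1, h2⟩
  have : t' = htl k r a := same_tile hT ht'T h hmem hmem2
  exact not_H_of_V hk (this ▸ hV) isHTile_htl

lemma htl_not_cross_end (hT : IsTiling m n k T) {r a : ℕ} (h : htl k r a ∈ T) (hk : 2 ≤ k) :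
    ¬ Cross T r (a + k) := by
  rintro ⟨_, t', ht'T, hm1, hm2⟩
  have hm1' : (r, a + k - 1) ∈ htl k r a := mem_htl.mpr ⟨rfl, by omega, by omega⟩
  have : t' = htl k r a := same_tile hT ht'T h hm1 hm1'
  subst this
  have := (mem_htl.mp hm2).2.2
  omega

/-- Two-row synchronized scan: if two rows have identical vertical-coverage pattern on
`[a, a+d)`, neither is crossed at `a`, and row `r1` has a vertical tile at column `a+d`,
then row `r2` is not crossed at `a+d`. -/
lemma scan (hT : IsTiling m n k T) (hk : 2 ≤ k) :
    ∀ d a r1 r2, r1 < m → r2 < m → ¬ Cross T r1 a → ¬ Cross T r2 a →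
      (∀ c, a ≤ c → c < a + d → (Vcov k T r1 c ↔ Vcov k T r2 c)) →
      Vcov k T r1 (a + d) → ¬ Cross T r2 (a + d) := by
  intro d
  induction d using Nat.strong_induction_on with
  | _ d IH =>
    intro a r1 r2 hr1 hr2 hnc1 hnc2 hpat hstop
    rcases Nat.eq_zero_or_pos d with rfl | hd
    · simpa using hnc2
    by_cases hv : Vcov k T r1 a
    · have hv2 : Vcov k T r2 a := (hpat a le_rfl (by omega)).mp hv
      have h1 := (vcov_not_cross hT hv).2
      have h2 := (vcov_not_cross hT hv2).2
      have := IH (d - 1) (by omega) (a + 1) r1 r2 hr1 hr2 h1 h2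
        (fun c hc1 hc2 => hpat c (by omega) (by omega))
        (by rw [show a + 1 + (d - 1) = a + d by omega]; exact hstop)
      rwa [show a + 1 + (d - 1) = a + d by omega] at this
    · have hv2 : ¬ Vcov k T r2 a := fun h => hv ((hpat a le_rfl (by omega)).mpr h)
      have han : a < n := by
        have := vcov_lt_n hT hstop; omega
      have h1 := hstep hT hk hr1 han hnc1 hv
      have h2 := hstep hT hk hr2 han hnc2 hv2
      have hkd : k ≤ d := by
        by_contra hkd
        exact htl_no_vcov hT hk h1 (by omega) (by omega) hstop
      have hnc1' := htl_not_cross_end hT h1 hk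
      have hnc2' := htl_not_cross_end hT h2 hk
      have := IH (d - k) (by omega) (a + k) r1 r2 hr1 hr2 hnc1' hnc2'
        (fun c hc1 hc2 => hpat c (by omega) (by omega))
        (by rw [show a + k + (d - k) = a + d by omega]; exact hstop)
      rwa [show a + k + (d - k) = a + d by omega] at this

end Tiling

end Stmt5Aux

open Stmt5Aux in
theorem stmt_5 (k m n : ℕ) (hk : 2 ≤ k) (h1 : k < m) (h2 : m < 2 * k) (hn : k < n)
    (T : Finset (Finset (ℕ × ℕ))) (hT : IsTiling m n k T) (hff : FaultFree n T) :
    ∃ i0 : ℕ, i0 + k ≤ m ∧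
      ∀ t ∈ T, (∃ c ∈ t, c.1 < i0 ∨ i0 + k ≤ c.1) → IsHTile k t := by
  classical
  -- bounds for a vertical tile in T
  have vt_bounds : ∀ i j, vt k i j ∈ T → i + k ≤ m ∧ j < n := by
    intro i j h
    have hmem : (i + (k - 1), j) ∈ vt k i j := mem_vt.mpr ⟨by omega, by omega, rfl⟩
    have := sub_grid hT h hmem
    simp only at this
    omega
  by_cases hall : ∀ t ∈ T, IsHTile k t
  · exact ⟨0, by omega, fun t htT _ => hall t htT⟩
  push_neg at hall
  obtain ⟨t0, ht0T, ht0⟩ := hall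
  have hV0 : IsVTile k t0 := (hT.1 t0 ht0T).resolve_left ht0
  obtain ⟨iv, jv, rfl⟩ := vtile_eq hV0
  -- smallest column hosting a vertical tile
  have hQ : ∃ j, ∃ i, vt k i j ∈ T := ⟨jv, iv, ht0T⟩
  set jstar := Nat.find hQ with hjstar
  obtain ⟨i0, hstar⟩ := Nat.find_spec hQ
  refine ⟨i0, (vt_bounds i0 jstar hstar).1, ?_⟩
  -- main claim: every vertical tile starts at i0
  have CLAIM : ∀ i j, vt k i j ∈ T → i = i0 := by
    by_contra hcl
    push_neg at hcl
    have hD : ∃ j, ∃ i, vt k i j ∈ T ∧ i ≠ i0 := by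
      obtain ⟨i, j, hij, hne⟩ := hcl
      exact ⟨j, i, hij, hne⟩
    set jd := Nat.find hD with hjd
    obtain ⟨iq, hq, hne⟩ := Nat.find_spec hD
    have hqb := vt_bounds iq jd hq
    have hi0b := vt_bounds i0 jstar hstar
    -- jd ≥ 1
    have hjd1 : 0 < jd := by
      have hle : jstar ≤ jd := Nat.find_min' hQ ⟨iq, hq⟩
      rcases Nat.lt_or_ge jstar jd with h | h
      · omega
      · -- jstar = jd : contradiction
        have heq : jstar = jd := by omega
        exfalso
        have hstar' : vt k i0 jd ∈ T := heq ▸ hstar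
        have hm1 : (k - 1, jd) ∈ vt k i0 jd := mem_vt.mpr ⟨by omega, by omega, rfl⟩
        have hm2 : (k - 1, jd) ∈ vt k iq jd := mem_vt.mpr ⟨by omega, by omega, rfl⟩
        have hteq : vt k i0 jd = vt k iq jd := same_tile hT hstar' hq hm1 hm2
        have ha1 : (i0, jd) ∈ vt k i0 jd := mem_vt.mpr ⟨le_rfl, by omega, rfl⟩
        have ha2 : (iq, jd) ∈ vt k iq jd := mem_vt.mpr ⟨le_rfl, by omega, rfl⟩
        rw [hteq] at ha1
        rw [← hteq] at ha2
        have := (mem_vt.mp ha1).1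
        have := (mem_vt.mp ha2).1
        omega
    -- all vertical tiles at columns < jd start at i0
    have hmin : ∀ c, c < jd → ∀ i, vt k i c ∈ T → i = i0 := by
      intro c hc i hic
      by_contra hne'
      exact Nat.find_min hD hc ⟨i, hic, hne'⟩
    -- extract start/column from Vcov
    have vcov_struct : ∀ r c, Vcov k T r c → ∃ i, vt k i c ∈ T ∧ i ≤ r ∧ r < i + k := by
      rintro r c ⟨t, htT, hV, hmem⟩
      obtain ⟨i, j, rfl⟩ := vtile_eq hV
      obtain ⟨hir, hri, rfl⟩ := mem_vt.mp hmem
      exact ⟨i, htT, hir, hri⟩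
    -- the two reference rows
    set r0 := k - 1 with hr0
    have hr0m : r0 < m := by omega
    set rin := if iq < i0 then iq else iq + k - 1 with hrin
    have hrinm : rin < m := by
      rw [hrin]; split <;> omega
    have hrin_win : iq ≤ rin ∧ rin < iq + k := by
      rw [hrin]; split <;> omega
    have hrin_out : rin < i0 ∨ i0 + k ≤ rin := by
      rw [hrin]; split
      · omega
      · omega
    have hvr0 : Vcov k T r0 jd :=
      ⟨vt k iq jd, hq, isVTile_vt, mem_vt.mpr ⟨by omega, by omega, rfl⟩⟩
    have hvrin : Vcov k T rin jd :=
      ⟨vt k iq jd, hq, isVTile_vt, mem_vt.mpr ⟨hrin_win.1, hrin_win.2, rfl⟩⟩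
    -- no crossing at x = jd in any row
    have key : ∀ r', r' < m → ¬ Cross T r' jd := by
      intro r' hr'm
      by_cases hw : i0 ≤ r' ∧ r' < i0 + k
      · -- compare with row r0 (all verticals < jd present in both)
        have hpat : ∀ c, 0 ≤ c → c < 0 + jd → (Vcov k T r0 c ↔ Vcov k T r' c) := by
          intro c _ hc
          simp only [Nat.zero_add] at hc
          constructor
          · intro h
            obtain ⟨i, hic, _, _⟩ := vcov_struct _ _ h
            have : i = i0 := hmin c hc i hic
            exact ⟨vt k i c, hic, isVTile_vt, mem_vt.mpr ⟨by omega, by omega, rfl⟩⟩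
          · intro h
            obtain ⟨i, hic, hi1, hi2⟩ := vcov_struct _ _ h
            have : i = i0 := hmin c hc i hic
            exact ⟨vt k i c, hic, isVTile_vt, mem_vt.mpr ⟨by omega, by omega, rfl⟩⟩
        have := scan hT hk jd 0 r0 r' hr0m hr'm (by simp [Cross]) (by simp [Cross]) hpat
          (by simpa using hvr0)
        simpa using this
      · -- compare with row rin (no verticals < jd present in either)
        have hpat : ∀ c, 0 ≤ c → c < 0 + jd → (Vcov k T rin c ↔ Vcov k T r' c) := by
          intro c _ hc
          simp only [Nat.zero_add] at hc
          constructor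
          · intro h
            exfalso
            obtain ⟨i, hic, hi1, hi2⟩ := vcov_struct _ _ h
            have : i = i0 := hmin c hc i hic
            omega
          · intro h
            exfalso
            obtain ⟨i, hic, hi1, hi2⟩ := vcov_struct _ _ h
            have : i = i0 := hmin c hc i hic
            omega
        have := scan hT hk jd 0 rin r' hrinm hr'm (by simp [Cross]) (by simp [Cross]) hpat
          (by simpa using hvrin)
        simpa using this
    -- hence x = jd is a fault
    have hfault : HasFaultAt T jd := by
      intro t htT
      rcases hT.1 t htT with hH | hV
      · obtain ⟨r', c0, rfl⟩ := htile_eq hH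
        rcases le_or_gt (c0 + k) jd with hle | hgt
        · left; intro c hc
          have := (mem_htl.mp (by exact hc : ((c.1, c.2) : ℕ × ℕ) ∈ htl k r' c0)).2.2
          omega
        rcases le_or_gt jd c0 with hge | hlt
        · right; intro c hc
          have := (mem_htl.mp (by exact hc : ((c.1, c.2) : ℕ × ℕ) ∈ htl k r' c0)).2.1
          omega
        · exfalso
          have hr'm : r' < m := by
            have hmem : (r', c0) ∈ htl k r' c0 := mem_htl.mpr ⟨rfl, le_rfl, by omega⟩
            exact (sub_grid hT htT hmem).1
          apply key r' hr'm
          refine ⟨hjd1, htl k r' c0, htT, ?_, ?_⟩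
          · exact mem_htl.mpr ⟨rfl, by omega, by omega⟩
          · exact mem_htl.mpr ⟨rfl, by omega, by omega⟩
      · obtain ⟨i, j, rfl⟩ := vtile_eq hV
        rcases Nat.lt_or_ge j jd with h | h
        · left; intro c hc
          have := (mem_vt.mp (by exact hc : ((c.1, c.2) : ℕ × ℕ) ∈ vt k i j)).2.2
          omega
        · right; intro c hc
          have := (mem_vt.mp (by exact hc : ((c.1, c.2) : ℕ × ℕ) ∈ vt k i j)).2.2
          omega
    exact hff jd hjd1 hqb.2 hfault
  -- conclude
  intro t htT hc
  by_cases hH : IsHTile k t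
  · exact hH
  exfalso
  have hV : IsVTile k t := (hT.1 t htT).resolve_left hH
  obtain ⟨i, j, rfl⟩ := vtile_eq hV
  have hii : i = i0 := CLAIM i j htT
  obtain ⟨c, hct, hcr⟩ := hc
  have := mem_vt.mp (by exact hct : ((c.1, c.2) : ℕ × ℕ) ∈ vt k i j)
  omega
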